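/- A partition λ = (α_1−1, …, α_p−1 | α_1, …, α_p) in Frobenius notation (with α_1 > ⋯ > α_p > 0) is an even partition (all parts even) if and only if p is even, α_1, α_3, …, α_{p−1} are all even, and α_{2i−1} − α_{2i} = 1 for all i = 1,…,p/2. -/
import Mathlib


/-- a partition `λ = (α₁−1, …, α_p−1 | α₁, …, α_p)` in Frobenius notation
(with `α₁ > ⋯ > α_p > 0`, realized as a Young diagram `μ` with Durfee square of size
`p`, 0-based row lengths `α i + i` and column lengths `α i + i + 1`) is even (all parts
even) if and only if `p` is even, `α₁, α₃, …, α_{p−1}` (0-based: the `α` at even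
indices) are all even, and `α_{2i−1} − α_{2i} = 1` for all `i = 1, …, p/2`. -/
theorem frobenius_leg_plus_one_even_iff (p : ℕ) (hp : 1 ≤ p) (α : Fin p → ℕ)
    (hα : StrictAnti α) (hpos : ∀ i, 0 < α i) (μ : YoungDiagram)
    (hdiag : ∀ i : Fin p, ((i : ℕ), (i : ℕ)) ∈ μ) (hdur : (p, p) ∉ μ)
    (hrow : ∀ i : Fin p, μ.rowLen i = α i + i)
    (hcol : ∀ i : Fin p, μ.colLen i = α i + i + 1) :
    (∀ i : ℕ, Even (μ.rowLen i)) ↔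
      (Even p ∧ (∀ i : Fin p, Even (i : ℕ) → Even (α i)) ∧
        (∀ j : ℕ, ∀ h : 2 * j + 1 < p, α ⟨2 * j, by omega⟩ = α ⟨2 * j + 1, h⟩ + 1)) := by
  -- strict antitonicity quantified
  have key : ∀ d : ℕ, ∀ i j : Fin p, (j : ℕ) = (i : ℕ) + d → α j + d ≤ α i := by
    intro d
    induction d with
    | zero =>
      intro i j h
      have : j = i := Fin.ext (by omega)
      subst this; simp
    | succ d ih =>
      intro i j h
      have hk : (i : ℕ) + d < p := by omega
      have h1 : α j + d + 1 ≤ α ⟨(i : ℕ) + d, hk⟩ + d := by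
        have : α j < α ⟨(i : ℕ) + d, hk⟩ := hα (by simp only [Fin.lt_def, Fin.val_mk]; omega)
        omega
      have h2 := ih i ⟨(i : ℕ) + d, hk⟩ rfl
      omega
  -- every β i = α i + i is at least p
  have hβp : ∀ i : Fin p, p ≤ α i + i := by
    intro i
    have hlast : ((⟨p - 1, by omega⟩ : Fin p) : ℕ) = (i : ℕ) + (p - 1 - i) := by
      simp only [Fin.val_mk]; omega
    have h1 := key (p - 1 - i) i ⟨p - 1, by omega⟩ hlast
    have h2 := hpos (⟨p - 1, by omega⟩ : Fin p)
    omega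
  -- β antitone
  have hβanti : ∀ i j : Fin p, (i : ℕ) ≤ j → α j + (j : ℕ) ≤ α i + i := by
    intro i j hij
    have := key ((j : ℕ) - i) i j (by omega)
    omega
  constructor
  · intro heven
    -- p is even: rowLen p = p
    have hplen : μ.rowLen p = p := by
      have h1 : ¬ (p < μ.rowLen p) := by
        rw [← YoungDiagram.mem_iff_lt_rowLen]; exact hdur
      have h2 : (p, p - 1) ∈ μ := by
        rw [YoungDiagram.mem_iff_lt_colLen]
        have hm : p - 1 < p := by omega
        have hc1 := hcol ⟨p - 1, hm⟩
        have hb1 := hβp ⟨p - 1, hm⟩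
        simp only [Fin.val_mk] at hc1 hb1
        omega
      rw [YoungDiagram.mem_iff_lt_rowLen] at h2
      omega
    have hpe : Even p := by rw [← hplen]; exact heven p
    refine ⟨hpe, ?_, ?_⟩
    · intro i hi
      have := heven i
      rw [hrow i] at this
      rcases this with ⟨k, hk⟩
      rcases hi with ⟨m, hm⟩
      exact ⟨k - m, by omega⟩
    · intro j hj
      by_contra hne
      have hle := hβanti ⟨2 * j, by omega⟩ ⟨2 * j + 1, hj⟩ (by simp only [Fin.le_def, Fin.val_mk]; omega)
      simp only [Fin.val_mk] at hle
      have hgt : α ⟨2 * j + 1, hj⟩ + 2 ≤ α ⟨2 * j, by omega⟩ := by omega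
      set r : ℕ := α ⟨2 * j + 1, hj⟩ + 2 * j + 2 with hr
      have hc0 := hcol ⟨2 * j, by omega⟩
      have hc1 := hcol ⟨2 * j + 1, hj⟩
      simp only [Fin.val_mk] at hc0 hc1
      have hrlen : μ.rowLen r = 2 * j + 1 := by
        have hm1 : (r, 2 * j) ∈ μ := by
          rw [YoungDiagram.mem_iff_lt_colLen, hc0]; omega
        have hm2 : (r, 2 * j + 1) ∉ μ := by
          rw [YoungDiagram.mem_iff_lt_colLen, hc1]; omega
        rw [YoungDiagram.mem_iff_lt_rowLen] at hm1 hm2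
        omega
      have h5 := heven r
      rw [hrlen] at h5
      rcases h5 with ⟨q, hq⟩
      omega
  · rintro ⟨hpe, hev, hpair⟩ r
    by_cases hrp : r < p
    · have hrl := hrow ⟨r, hrp⟩
      simp only [Fin.val_mk] at hrl
      rw [hrl]
      rcases Nat.even_or_odd r with hre | hro
      · rcases hev ⟨r, hrp⟩ (by simpa using hre) with ⟨k, hk⟩
        rcases hre with ⟨m, hm⟩
        exact ⟨k + m, by omega⟩
      · rcases hro with ⟨j, hjr⟩
        have hjp : 2 * j + 1 < p := by omega
        have hpr := hpair j hjp
        rcases hev ⟨2 * j, by omega⟩ ⟨j, by simp only [Fin.val_mk]; ring⟩ with ⟨k, hk⟩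
        rw [hpr] at hk
        have : (⟨2 * j + 1, hjp⟩ : Fin p) = (⟨r, hrp⟩ : Fin p) := Fin.ext (by simp only [Fin.val_mk]; omega)
        rw [this] at hk
        exact ⟨k + j, by omega⟩
    · push_neg at hrp
      set m := μ.rowLen r with hm
      rcases Nat.even_or_odd m with hme | hmo
      · exact hme
      exfalso
      rcases hmo with ⟨j, hjm⟩
      have hm1 : (r, 2 * j) ∈ μ := by
        rw [YoungDiagram.mem_iff_lt_rowLen, ← hm]; omega
      have hm2 : (r, 2 * j + 1) ∉ μ := by
        rw [YoungDiagram.mem_iff_lt_rowLen, ← hm]; omega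
      have hjp : 2 * j < p := by
        by_contra hc
        push_neg at hc
        exact hdur (μ.up_left_mem hrp hc hm1)
      have hjp1 : 2 * j + 1 < p := by
        rcases hpe with ⟨q, hq⟩
        omega
      have hc0 := hcol ⟨2 * j, hjp⟩
      have hc1 := hcol ⟨2 * j + 1, hjp1⟩
      simp only [Fin.val_mk] at hc0 hc1
      rw [YoungDiagram.mem_iff_lt_colLen, hc0] at hm1
      rw [YoungDiagram.mem_iff_lt_colLen, hc1] at hm2
      have hpr := hpair j hjp1
      omega
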